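/- Let N ∈ ℕ, let A : ℝ^N → ℝ^{N×N} be a Borel measurable map taking values in the symmetric nonnegative definite matrices, and let B : ℝ^N → ℝ^N be Borel measurable. For u ∈ C²(ℝ^N) set L_{A,B}u(x) := Tr(A(x) D²u(x)) + ⟨B(x), ∇u(x)⟩. Let μ be a Borel probability measure on ℝ^N such that x ↦ ‖A(x)‖ and x ↦ |B(x)| are locally μ-integrable and ∫ L_{A,B}u dμ = 0 for every compactly supported u ∈ C²(ℝ^N). Let V : ℝ^N → [0,∞) be twice continuously differentiable with compact level sets {V ≤ c}, c ∈ [0,∞), let Θ : ℝ^N → [0,∞) be Borel measurable, and let Q ∈ L¹(μ) satisfy L_{A,B}V(x) ≤ Q(x) − Θ(x) for all x ∈ ℝ^N. Then Θ ∈ L¹(μ) and ∫ Θ dμ ≤ ∫ Q dμ. -/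

import Mathlib

open MeasureTheory

/-- The Kolmogorov operator `L_{A,B} u = Tr(A D²u) + ⟨B, ∇u⟩` on `ℝ^N`. -/
noncomputable def kolmogorovOp (N : ℕ)
    (A : EuclideanSpace ℝ (Fin N) → Matrix (Fin N) (Fin N) ℝ)
    (B : EuclideanSpace ℝ (Fin N) → Fin N → ℝ)
    (u : EuclideanSpace ℝ (Fin N) → ℝ) (x : EuclideanSpace ℝ (Fin N)) : ℝ :=
  Matrix.trace
      (A x * Matrix.of fun i j =>
        fderiv ℝ (fun y => fderiv ℝ u y (EuclideanSpace.single j 1)) x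
          (EuclideanSpace.single i 1))
    + ∑ i, B x i * fderiv ℝ u x (EuclideanSpace.single i 1)

open Real Filter


/-- derivative of a monotone differentiable function is nonnegative -/
lemma monotone_deriv_nonneg' {f : ℝ → ℝ} (hf : Monotone f) {x : ℝ}
    (hd : DifferentiableAt ℝ f x) : 0 ≤ deriv f x := by
  have h := hd.hasDerivAt
  rw [hasDerivAt_iff_tendsto_slope] at h
  refine ge_of_tendsto h ?_
  filter_upwards [self_mem_nhdsWithin] with y hy
  rw [slope_def_field]
  rcases lt_or_gt_of_ne (hy : y ≠ x) with h' | h'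
  · have hnum : f y - f x ≤ 0 := by have := hf h'.le; linarith
    have hden : y - x < 0 := by linarith
    rw [div_nonneg_iff]
    exact Or.inr ⟨hnum, hden.le⟩
  · have hnum : 0 ≤ f y - f x := by have := hf h'.le; linarith
    exact div_nonneg hnum (by linarith)

lemma expNegInvGlue_monotone : Monotone expNegInvGlue := by
  intro x y hxy
  rcases le_or_gt x 0 with hx | hx
  · rw [expNegInvGlue.zero_of_nonpos hx]; exact expNegInvGlue.nonneg y
  · have hy : 0 < y := lt_of_lt_of_le hx hxy
    simp only [expNegInvGlue, if_neg hx.not_ge, if_neg hy.not_ge]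
    exact Real.exp_le_exp.2 (by
      have := one_div_le_one_div_of_le hx hxy
      simp only [one_div] at this
      linarith)

lemma smoothTransition_monotone : Monotone Real.smoothTransition := by
  intro x y hxy
  unfold Real.smoothTransition
  rw [div_le_div_iff₀ (Real.smoothTransition.pos_denom x) (Real.smoothTransition.pos_denom y)]
  have h1 : expNegInvGlue x ≤ expNegInvGlue y := expNegInvGlue_monotone hxy
  have h2 : expNegInvGlue (1 - y) ≤ expNegInvGlue (1 - x) :=
    expNegInvGlue_monotone (by linarith)
  have h3 := expNegInvGlue.nonneg x
  have h4 := expNegInvGlue.nonneg y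
  have h5 := expNegInvGlue.nonneg (1 - y)
  nlinarith [mul_le_mul h1 h2 h5 h4]

noncomputable def cutPhi (n : ℕ) (s : ℝ) : ℝ := Real.smoothTransition ((n : ℝ) + 1 - s)

noncomputable def cutPsi (n : ℕ) (t : ℝ) : ℝ := ∫ s in (0:ℝ)..t, cutPhi n s

lemma cutPhi_contDiff (n : ℕ) : ContDiff ℝ 2 (cutPhi n) := by
  have h : ContDiff ℝ 2 (fun s : ℝ => (n : ℝ) + 1 - s) := contDiff_const.sub contDiff_id
  exact Real.smoothTransition.contDiff.comp h

lemma cutPhi_continuous (n : ℕ) : Continuous (cutPhi n) :=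
  Real.smoothTransition.continuous.comp (by continuity)

lemma cutPhi_nonneg (n : ℕ) (s : ℝ) : 0 ≤ cutPhi n s := Real.smoothTransition.nonneg _

lemma cutPhi_le_one (n : ℕ) (s : ℝ) : cutPhi n s ≤ 1 := Real.smoothTransition.le_one _

lemma cutPhi_eq_one (n : ℕ) {s : ℝ} (h : s ≤ n) : cutPhi n s = 1 := by
  unfold cutPhi
  exact Real.smoothTransition.one_of_one_le (by linarith)

lemma cutPhi_eq_zero (n : ℕ) {s : ℝ} (h : (n : ℝ) + 1 ≤ s) : cutPhi n s = 0 := by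
  unfold cutPhi
  exact Real.smoothTransition.zero_of_nonpos (by linarith)

lemma cutPhi_mono {m n : ℕ} (h : m ≤ n) (s : ℝ) : cutPhi m s ≤ cutPhi n s := by
  unfold cutPhi
  apply smoothTransition_monotone
  have : (m : ℝ) ≤ n := Nat.cast_le.2 h
  linarith

lemma cutPhi_antitone (n : ℕ) : Antitone (cutPhi n) := by
  intro s t hst
  unfold cutPhi
  exact smoothTransition_monotone (by linarith)

lemma cutPhi_differentiable (n : ℕ) : Differentiable ℝ (cutPhi n) :=
  (cutPhi_contDiff n).differentiable (by norm_num)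

lemma cutPhi_deriv_nonpos (n : ℕ) (s : ℝ) : deriv (cutPhi n) s ≤ 0 := by
  have hg : Monotone (fun s => -cutPhi n s) := fun a b hab => by
    simp only [neg_le_neg_iff]
    exact cutPhi_antitone n hab
  have hd : DifferentiableAt ℝ (fun s => -cutPhi n s) s :=
    ((cutPhi_differentiable n) s).neg
  have := monotone_deriv_nonneg' hg hd
  rw [deriv.fun_neg] at this
  linarith

lemma cutPsi_hasDerivAt (n : ℕ) (t : ℝ) : HasDerivAt (cutPsi n) (cutPhi n t) t :=
  ((cutPhi_continuous n).integral_hasStrictDerivAt 0 t).hasDerivAt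

lemma cutPsi_deriv (n : ℕ) : deriv (cutPsi n) = cutPhi n :=
  funext fun t => (cutPsi_hasDerivAt n t).deriv

lemma cutPsi_contDiff (n : ℕ) : ContDiff ℝ 2 (cutPsi n) := by
  rw [show (2 : WithTop ℕ∞) = 1 + 1 from rfl, contDiff_succ_iff_deriv]
  refine ⟨fun t => (cutPsi_hasDerivAt n t).differentiableAt, by simp, ?_⟩
  rw [cutPsi_deriv]
  exact (cutPhi_contDiff n).of_le (by norm_num)

lemma cutPsi_deriv2_nonpos (n : ℕ) (s : ℝ) : deriv (deriv (cutPsi n)) s ≤ 0 := by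
  rw [cutPsi_deriv]
  exact cutPhi_deriv_nonpos n s

lemma cutPsi_eq_of_le (n : ℕ) {t : ℝ} (h : (n : ℝ) + 1 ≤ t) :
    cutPsi n t = cutPsi n ((n : ℝ) + 1) := by
  have hint : ∀ a b : ℝ, IntervalIntegrable (cutPhi n) MeasureTheory.volume a b :=
    fun a b => (cutPhi_continuous n).intervalIntegrable a b
  have hsplit := intervalIntegral.integral_add_adjacent_intervals
    (hint 0 ((n:ℝ)+1)) (hint ((n:ℝ)+1) t)
  have hzero : (∫ s in ((n:ℝ)+1)..t, cutPhi n s) = 0 := by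
    rw [intervalIntegral.integral_congr (g := fun _ => (0:ℝ))]
    · exact intervalIntegral.integral_zero
    · intro s hs
      rw [Set.uIcc_of_le h] at hs
      exact cutPhi_eq_zero n hs.1
  unfold cutPsi
  rw [← hsplit, hzero, add_zero]


lemma fderiv_comp_apply' {N : ℕ} {ψ : ℝ → ℝ} (hψ : Differentiable ℝ ψ)
    {V : EuclideanSpace ℝ (Fin N) → ℝ} (hV : Differentiable ℝ V)
    (y v : EuclideanSpace ℝ (Fin N)) :
    fderiv ℝ (fun z => ψ (V z)) y v = deriv ψ (V y) * fderiv ℝ V y v := by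
  have hc : fderiv ℝ (ψ ∘ V) y = (fderiv ℝ ψ (V y)).comp (fderiv ℝ V y) :=
    fderiv_comp y (hψ (V y)) (hV y)
  have h1 : fderiv ℝ (fun z => ψ (V z)) y v = (fderiv ℝ ψ (V y)) (fderiv ℝ V y v) := by
    rw [show (fun z => ψ (V z)) = ψ ∘ V from rfl, hc]; rfl
  rw [h1]
  have h2 : (fderiv ℝ ψ (V y)) (fderiv ℝ V y v)
      = (fderiv ℝ V y v) • (fderiv ℝ ψ (V y)) 1 := by
    rw [← (fderiv ℝ ψ (V y)).map_smul, smul_eq_mul, mul_one]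
  rw [h2, fderiv_apply_one_eq_deriv, smul_eq_mul, mul_comm]

lemma hess_entry_comp {N : ℕ} {ψ : ℝ → ℝ} (hψ : ContDiff ℝ 2 ψ)
    {V : EuclideanSpace ℝ (Fin N) → ℝ} (hV : ContDiff ℝ 2 V)
    (x v w : EuclideanSpace ℝ (Fin N)) :
    fderiv ℝ (fun y => fderiv ℝ (fun z => ψ (V z)) y w) x v
      = deriv (deriv ψ) (V x) * (fderiv ℝ V x v * fderiv ℝ V x w)
        + deriv ψ (V x) * fderiv ℝ (fun y => fderiv ℝ V y w) x v := by
  have hψd : Differentiable ℝ ψ := hψ.differentiable two_ne_zero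
  have hVd : Differentiable ℝ V := hV.differentiable two_ne_zero
  have hψ' : ContDiff ℝ 1 (deriv ψ) :=
    ((contDiff_succ_iff_deriv (n := 1)).1 hψ).2.2
  have hψ'd : Differentiable ℝ (deriv ψ) := hψ'.differentiable one_ne_zero
  have hF : ContDiff ℝ 1 (fderiv ℝ V) := hV.fderiv_right le_rfl
  have h1 : (fun y => fderiv ℝ (fun z => ψ (V z)) y w)
      = fun y => deriv ψ (V y) * fderiv ℝ V y w :=
    funext fun y => fderiv_comp_apply' hψd hVd y w
  rw [h1]
  have hd1 : DifferentiableAt ℝ (fun y => deriv ψ (V y)) x :=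
    (hψ'd (V x)).comp x (hVd x)
  have hd2 : DifferentiableAt ℝ (fun y => fderiv ℝ V y w) x :=
    (hF.differentiable one_ne_zero x).clm_apply (differentiableAt_const w)
  rw [fderiv_fun_mul hd1 hd2]
  have h3 : fderiv ℝ (fun y => deriv ψ (V y)) x v
      = deriv (deriv ψ) (V x) * fderiv ℝ V x v := fderiv_comp_apply' hψ'd hVd x v
  simp only [ContinuousLinearMap.add_apply, ContinuousLinearMap.coe_smul',
    Pi.smul_apply, smul_eq_mul, h3]
  ring

lemma kolmogorovOp_eq (N : ℕ)
    (A : EuclideanSpace ℝ (Fin N) → Matrix (Fin N) (Fin N) ℝ)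
    (B : EuclideanSpace ℝ (Fin N) → Fin N → ℝ)
    (u : EuclideanSpace ℝ (Fin N) → ℝ) (x : EuclideanSpace ℝ (Fin N)) :
    kolmogorovOp N A B u x
      = (∑ i, ∑ j, A x i j *
          fderiv ℝ (fun y => fderiv ℝ u y (EuclideanSpace.single i 1)) x
            (EuclideanSpace.single j 1))
        + ∑ i, B x i * fderiv ℝ u x (EuclideanSpace.single i 1) := by
  unfold kolmogorovOp
  congr 1

lemma kolmogorovOp_comp {N : ℕ}
    (A : EuclideanSpace ℝ (Fin N) → Matrix (Fin N) (Fin N) ℝ)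
    (B : EuclideanSpace ℝ (Fin N) → Fin N → ℝ)
    {ψ : ℝ → ℝ} (hψ : ContDiff ℝ 2 ψ)
    {V : EuclideanSpace ℝ (Fin N) → ℝ} (hV : ContDiff ℝ 2 V)
    (x : EuclideanSpace ℝ (Fin N)) :
    kolmogorovOp N A B (fun z => ψ (V z)) x
      = deriv ψ (V x) * kolmogorovOp N A B V x
        + deriv (deriv ψ) (V x) *
          ∑ i, ∑ j, A x i j *
            (fderiv ℝ V x (EuclideanSpace.single j 1) *
              fderiv ℝ V x (EuclideanSpace.single i 1)) := by
  have hψd : Differentiable ℝ ψ := hψ.differentiable two_ne_zero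
  have hVd : Differentiable ℝ V := hV.differentiable two_ne_zero
  rw [kolmogorovOp_eq, kolmogorovOp_eq]
  simp only [hess_entry_comp hψ hV]
  simp only [fderiv_comp_apply' hψd hVd]
  simp only [Finset.mul_sum, mul_add, Finset.sum_add_distrib]
  conv_rhs => rw [← add_rotate]
  congr 1
  · congr 1
    · exact Finset.sum_congr rfl fun i _ => Finset.sum_congr rfl fun j _ => by ring
    · exact Finset.sum_congr rfl fun i _ => Finset.sum_congr rfl fun j _ => by ring
  · exact Finset.sum_congr rfl fun i _ => by ring

lemma posSemidef_quad {N : ℕ} {M : Matrix (Fin N) (Fin N) ℝ} (hM : M.PosSemidef)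
    (g : Fin N → ℝ) : 0 ≤ ∑ i, ∑ j, M i j * (g j * g i) := by
  have h0 := hM.dotProduct_mulVec_nonneg g
  have h : dotProduct (star g) (M.mulVec g) = ∑ i, ∑ j, M i j * (g j * g i) := by
    simp only [dotProduct, Matrix.mulVec, Pi.star_apply, star_trivial,
      Finset.mul_sum]
    exact Finset.sum_congr rfl fun i _ => Finset.sum_congr rfl fun j _ => by ring
  rw [h] at h0
  exact_mod_cast h0

lemma kolmogorovOp_sub_const (N : ℕ)
    (A : EuclideanSpace ℝ (Fin N) → Matrix (Fin N) (Fin N) ℝ)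
    (B : EuclideanSpace ℝ (Fin N) → Fin N → ℝ)
    (u : EuclideanSpace ℝ (Fin N) → ℝ) (c : ℝ) (x : EuclideanSpace ℝ (Fin N)) :
    kolmogorovOp N A B (fun y => u y - c) x = kolmogorovOp N A B u x := by
  unfold kolmogorovOp
  simp only [fderiv_sub_const]

lemma kolmogorovOp_measurable {N : ℕ}
    {A : EuclideanSpace ℝ (Fin N) → Matrix (Fin N) (Fin N) ℝ}
    (hAmeas : ∀ i j, Measurable fun x => A x i j)
    {B : EuclideanSpace ℝ (Fin N) → Fin N → ℝ} (hBmeas : Measurable B)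
    (u : EuclideanSpace ℝ (Fin N) → ℝ) : Measurable (kolmogorovOp N A B u) := by
  have heq : kolmogorovOp N A B u = fun x =>
      (∑ i, ∑ j, A x i j *
          fderiv ℝ (fun y => fderiv ℝ u y (EuclideanSpace.single i 1)) x
            (EuclideanSpace.single j 1))
        + ∑ i, B x i * fderiv ℝ u x (EuclideanSpace.single i 1) :=
    funext (kolmogorovOp_eq N A B u)
  rw [heq]
  refine Measurable.add ?_ ?_
  · exact Finset.measurable_sum _ fun i _ => Finset.measurable_sum _ fun j _ =>
      (hAmeas i j).mul (measurable_fderiv_apply_const ℝ _ _)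
  · exact Finset.measurable_sum _ fun i _ =>
      ((measurable_pi_apply i).comp hBmeas).mul (measurable_fderiv_apply_const ℝ _ _)

lemma abs_entry_le_opNorm {N : ℕ} (M : Matrix (Fin N) (Fin N) ℝ) (i k : Fin N) :
    |M i k| ≤ ‖Matrix.toEuclideanCLM (𝕜 := ℝ) M‖ := by
  set w : EuclideanSpace ℝ (Fin N) :=
    Matrix.toEuclideanCLM (𝕜 := ℝ) M (EuclideanSpace.single k 1) with hwdef
  have hw : w i = M i k := by
    have h1 : w = (WithLp.equiv 2 _).symm (Matrix.toLin' M (Pi.single k 1)) := by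
      rw [hwdef, show (EuclideanSpace.single k (1:ℝ))
        = (WithLp.equiv 2 _).symm (Pi.single k 1) from rfl]
      rfl
    rw [h1]
    simp [Matrix.toLin'_apply, Matrix.mulVec_single]
  have h2 : |w i| ≤ ‖w‖ := by
    rw [EuclideanSpace.norm_eq]
    have h3 : |w i| = Real.sqrt (‖w i‖ ^ 2) := by
      rw [Real.sqrt_sq (norm_nonneg _), Real.norm_eq_abs]
    rw [h3]
    apply Real.sqrt_le_sqrt
    exact Finset.single_le_sum (f := fun j => ‖w j‖ ^ 2)
      (fun j _ => sq_nonneg _) (Finset.mem_univ i)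
  have h4 : ‖w‖ ≤ ‖Matrix.toEuclideanCLM (𝕜 := ℝ) M‖ := by
    rw [hwdef]
    calc ‖Matrix.toEuclideanCLM (𝕜 := ℝ) M (EuclideanSpace.single k 1)‖
        ≤ ‖Matrix.toEuclideanCLM (𝕜 := ℝ) M‖ * ‖EuclideanSpace.single k (1:ℝ)‖ :=
          ContinuousLinearMap.le_opNorm _ _
      _ = ‖Matrix.toEuclideanCLM (𝕜 := ℝ) M‖ := by
          rw [EuclideanSpace.norm_single, norm_one, mul_one]
  rw [← hw]
  exact h2.trans h4

lemma kolmogorovOp_zero_outside {N : ℕ}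
    (A : EuclideanSpace ℝ (Fin N) → Matrix (Fin N) (Fin N) ℝ)
    (B : EuclideanSpace ℝ (Fin N) → Fin N → ℝ)
    (u : EuclideanSpace ℝ (Fin N) → ℝ) {x : EuclideanSpace ℝ (Fin N)}
    (hx : x ∉ tsupport u) : kolmogorovOp N A B u x = 0 := by
  have hgrad : fderiv ℝ u x = 0 := by
    by_contra h
    exact hx (support_fderiv_subset ℝ (f := u) h)
  have hhess : ∀ j : Fin N,
      fderiv ℝ (fun y => fderiv ℝ u y (EuclideanSpace.single j 1)) x = 0 := by
    intro j
    by_contra h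
    have h1 : x ∈ tsupport (fun y => fderiv ℝ u y (EuclideanSpace.single j 1)) :=
      support_fderiv_subset ℝ h
    have h2 : tsupport (fun y => fderiv ℝ u y (EuclideanSpace.single j 1))
        ⊆ tsupport u := by
      apply closure_minimal ?_ (isClosed_tsupport u)
      intro y hy
      have hy' : fderiv ℝ u y ≠ 0 := fun h0 => hy (by
        simp only [Function.mem_support, h0, ContinuousLinearMap.zero_apply,
          ne_eq, not_true_eq_false] at hy ⊢)
      exact support_fderiv_subset ℝ (f := u) hy'
    exact hx (h2 h1)
  rw [kolmogorovOp_eq]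
  simp [hgrad, hhess]

lemma kolmogorovOp_integrable {N : ℕ}
    {A : EuclideanSpace ℝ (Fin N) → Matrix (Fin N) (Fin N) ℝ}
    (hAmeas : ∀ i j, Measurable fun x => A x i j)
    {B : EuclideanSpace ℝ (Fin N) → Fin N → ℝ} (hBmeas : Measurable B)
    {μ : Measure (EuclideanSpace ℝ (Fin N))}
    (hAloc : LocallyIntegrable (fun x => ‖Matrix.toEuclideanCLM (𝕜 := ℝ) (A x)‖) μ)
    (hBloc : LocallyIntegrable (fun x => Real.sqrt (∑ i, (B x i) ^ 2)) μ)
    {u : EuclideanSpace ℝ (Fin N) → ℝ} (hu : ContDiff ℝ 2 u)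
    (hcs : HasCompactSupport u) : Integrable (kolmogorovOp N A B u) μ := by
  set K := tsupport u with hKdef
  have hKc : IsCompact K := hcs
  have hKm : MeasurableSet K := (isClosed_tsupport u).measurableSet
  have hF : ContDiff ℝ 1 (fderiv ℝ u) := hu.fderiv_right le_rfl
  have hFc : HasCompactSupport (fderiv ℝ u) := hcs.fderiv (𝕜 := ℝ)
  obtain ⟨Cg, hCg⟩ := hFc.exists_bound_of_continuous (hF.continuous)
  have hGc : ∀ j : Fin N,
      HasCompactSupport (fun y => fderiv ℝ u y (EuclideanSpace.single j 1)) :=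
    fun j => hFc.comp_left
      (g := fun L : EuclideanSpace ℝ (Fin N) →L[ℝ] ℝ => L (EuclideanSpace.single j 1)) rfl
  have hGcd : ∀ j : Fin N,
      ContDiff ℝ 1 (fun y => fderiv ℝ u y (EuclideanSpace.single j 1)) :=
    fun j => hF.clm_apply contDiff_const
  have hHbd : ∀ j : Fin N, ∃ C : ℝ, ∀ x,
      ‖fderiv ℝ (fun y => fderiv ℝ u y (EuclideanSpace.single j 1)) x‖ ≤ C :=
    fun j => ((hGc j).fderiv (𝕜 := ℝ)).exists_bound_of_continuous
      ((hGcd j).continuous_fderiv one_ne_zero)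
  choose CH hCH using hHbd
  set C1 : ℝ := ∑ i : Fin N, ∑ _j : Fin N, CH i with hC1
  set g : EuclideanSpace ℝ (Fin N) → ℝ := K.indicator
    (fun x => C1 * ‖Matrix.toEuclideanCLM (𝕜 := ℝ) (A x)‖
      + ((N : ℝ) * Cg) * Real.sqrt (∑ i, (B x i) ^ 2)) with hgdef
  have hgint : Integrable g μ := by
    rw [hgdef, integrable_indicator_iff hKm]
    exact ((hAloc.integrableOn_isCompact hKc).const_mul _).add
      ((hBloc.integrableOn_isCompact hKc).const_mul _)
  refine Integrable.mono' hgint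
    ((kolmogorovOp_measurable hAmeas hBmeas u).aestronglyMeasurable)
    (Filter.Eventually.of_forall fun x => ?_)
  by_cases hx : x ∈ K
  · rw [hgdef, Set.indicator_of_mem hx, Real.norm_eq_abs, kolmogorovOp_eq]
    refine (abs_add_le _ _).trans (add_le_add ?_ ?_)
    · calc |∑ i, ∑ j, A x i j *
            fderiv ℝ (fun y => fderiv ℝ u y (EuclideanSpace.single i 1)) x
              (EuclideanSpace.single j 1)|
          ≤ ∑ i, |∑ j, A x i j *
            fderiv ℝ (fun y => fderiv ℝ u y (EuclideanSpace.single i 1)) x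
              (EuclideanSpace.single j 1)| := Finset.abs_sum_le_sum_abs _ _
        _ ≤ ∑ i, ∑ j, |A x i j *
            fderiv ℝ (fun y => fderiv ℝ u y (EuclideanSpace.single i 1)) x
              (EuclideanSpace.single j 1)| :=
            Finset.sum_le_sum fun i _ => Finset.abs_sum_le_sum_abs _ _
        _ ≤ ∑ i : Fin N, ∑ _j : Fin N,
            CH i * ‖Matrix.toEuclideanCLM (𝕜 := ℝ) (A x)‖ := by
            refine Finset.sum_le_sum fun i _ => Finset.sum_le_sum fun j _ => ?_
            rw [abs_mul, mul_comm]
            refine mul_le_mul ?_ (abs_entry_le_opNorm (A x) i j) (abs_nonneg _)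
              ((norm_nonneg _).trans (hCH i x))
            calc |fderiv ℝ (fun y => fderiv ℝ u y (EuclideanSpace.single i 1)) x
                  (EuclideanSpace.single j 1)|
                ≤ ‖fderiv ℝ (fun y => fderiv ℝ u y (EuclideanSpace.single i 1)) x‖
                  * ‖EuclideanSpace.single j (1:ℝ)‖ := by
                  rw [← Real.norm_eq_abs]
                  exact ContinuousLinearMap.le_opNorm _ _
              _ ≤ CH i := by
                  rw [EuclideanSpace.norm_single, norm_one, mul_one]
                  exact hCH i x
        _ = C1 * ‖Matrix.toEuclideanCLM (𝕜 := ℝ) (A x)‖ := by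
            rw [hC1, Finset.sum_mul]
            exact Finset.sum_congr rfl fun i _ => by rw [Finset.sum_mul]
    · calc |∑ i, B x i * fderiv ℝ u x (EuclideanSpace.single i 1)|
          ≤ ∑ i, |B x i * fderiv ℝ u x (EuclideanSpace.single i 1)| :=
            Finset.abs_sum_le_sum_abs _ _
        _ ≤ ∑ _i : Fin N, Real.sqrt (∑ k, (B x k) ^ 2) * Cg := by
            refine Finset.sum_le_sum fun i _ => ?_
            rw [abs_mul]
            refine mul_le_mul ?_ ?_ (abs_nonneg _) (Real.sqrt_nonneg _)
            · rw [show |B x i| = Real.sqrt ((B x i) ^ 2) by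
                rw [Real.sqrt_sq_eq_abs]]
              exact Real.sqrt_le_sqrt (Finset.single_le_sum
                (f := fun k => (B x k) ^ 2) (fun k _ => sq_nonneg _)
                (Finset.mem_univ i))
            · calc |fderiv ℝ u x (EuclideanSpace.single i 1)|
                  ≤ ‖fderiv ℝ u x‖ * ‖EuclideanSpace.single i (1:ℝ)‖ := by
                    rw [← Real.norm_eq_abs]
                    exact ContinuousLinearMap.le_opNorm _ _
                _ ≤ Cg := by
                    rw [EuclideanSpace.norm_single, norm_one, mul_one]
                    exact hCg x
        _ = ((N : ℝ) * Cg) * Real.sqrt (∑ i, (B x i) ^ 2) := by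
            rw [Finset.sum_const, Finset.card_univ, Fintype.card_fin, nsmul_eq_mul]
            ring
  · rw [hgdef, Set.indicator_of_notMem hx, kolmogorovOp_zero_outside A B u hx]
    simp


/-- If `μ` is a probability measure on `ℝ^N` with `L_{A,B}^* μ = 0`
(infinitesimal invariance on compactly supported `C²` functions), `V ≥ 0` is `C²` with
compact level sets, `Θ ≥ 0` is Borel, `Q ∈ L¹(μ)` and `L_{A,B} V ≤ Q - Θ`, then
`Θ ∈ L¹(μ)` and `∫ Θ dμ ≤ ∫ Q dμ`. -/
theorem lyapunov_integrability_of_infinitesimally_invariant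
    (N : ℕ)
    (A : EuclideanSpace ℝ (Fin N) → Matrix (Fin N) (Fin N) ℝ)
    (hAmeas : ∀ i j, Measurable fun x => A x i j)
    (hAsymm : ∀ x, (A x).IsSymm) (hApos : ∀ x, (A x).PosSemidef)
    (B : EuclideanSpace ℝ (Fin N) → Fin N → ℝ) (hBmeas : Measurable B)
    (μ : Measure (EuclideanSpace ℝ (Fin N))) [IsProbabilityMeasure μ]
    (hAloc : LocallyIntegrable (fun x => ‖Matrix.toEuclideanCLM (𝕜 := ℝ) (A x)‖) μ)
    (hBloc : LocallyIntegrable (fun x => Real.sqrt (∑ i, (B x i) ^ 2)) μ)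
    (hinv : ∀ u : EuclideanSpace ℝ (Fin N) → ℝ, ContDiff ℝ 2 u → HasCompactSupport u →
      ∫ x, kolmogorovOp N A B u x ∂μ = 0)
    (V : EuclideanSpace ℝ (Fin N) → ℝ) (hV : ContDiff ℝ 2 V) (hVpos : ∀ x, 0 ≤ V x)
    (hVlev : ∀ c : ℝ, IsCompact {x | V x ≤ c})
    (Θ : EuclideanSpace ℝ (Fin N) → ℝ) (hΘmeas : Measurable Θ) (hΘpos : ∀ x, 0 ≤ Θ x)
    (Q : EuclideanSpace ℝ (Fin N) → ℝ) (hQ : Integrable Q μ)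
    (hLV : ∀ x, kolmogorovOp N A B V x ≤ Q x - Θ x) :
    Integrable Θ μ ∧ ∫ x, Θ x ∂μ ≤ ∫ x, Q x ∂μ := by
  classical
  have hVcont : Continuous V := hV.continuous
  have hφVcont : ∀ n : ℕ, Continuous (fun x => cutPhi n (V x)) :=
    fun n => (cutPhi_continuous n).comp hVcont
  have hφQint : ∀ n : ℕ, Integrable (fun x => cutPhi n (V x) * Q x) μ := by
    intro n
    refine hQ.bdd_mul (c := 1) (hφVcont n).aestronglyMeasurable (Filter.Eventually.of_forall fun x => ?_)
    rw [Real.norm_eq_abs, abs_of_nonneg (cutPhi_nonneg _ _)]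
    exact cutPhi_le_one _ _
  have key : ∀ n : ℕ, Integrable (fun x => cutPhi n (V x) * Θ x) μ ∧
      ∫ x, cutPhi n (V x) * Θ x ∂μ ≤ ∫ x, cutPhi n (V x) * Q x ∂μ := by
    intro n
    set c : ℝ := cutPsi n ((n : ℝ) + 1) with hc
    set u : EuclideanSpace ℝ (Fin N) → ℝ := fun y => cutPsi n (V y) - c with hu_def
    have hu : ContDiff ℝ 2 u := ((cutPsi_contDiff n).comp hV).sub contDiff_const
    have hucs : HasCompactSupport u := by
      apply HasCompactSupport.intro (hVlev ((n : ℝ) + 1))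
      intro y hy
      have hy' : (n : ℝ) + 1 ≤ V y := le_of_lt (not_le.mp hy)
      simp [hu_def, cutPsi_eq_of_le n hy', hc]
    have hint0 : ∫ x, kolmogorovOp N A B u x ∂μ = 0 := hinv u hu hucs
    have huint : Integrable (kolmogorovOp N A B u) μ :=
      kolmogorovOp_integrable hAmeas hBmeas hAloc hBloc hu hucs
    have hptwise : ∀ x, cutPhi n (V x) * Θ x
        ≤ cutPhi n (V x) * Q x - kolmogorovOp N A B u x := by
      intro x
      have h1 : kolmogorovOp N A B u x
          = kolmogorovOp N A B (fun z => cutPsi n (V z)) x :=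
        kolmogorovOp_sub_const N A B (fun z => cutPsi n (V z)) c x
      have h2 := kolmogorovOp_comp A B (cutPsi_contDiff n) hV x
      have hq : (0:ℝ) ≤ ∑ i, ∑ j, A x i j *
          (fderiv ℝ V x (EuclideanSpace.single j 1) *
            fderiv ℝ V x (EuclideanSpace.single i 1)) :=
        posSemidef_quad (hApos x) _
      have h3 : kolmogorovOp N A B u x
          ≤ cutPhi n (V x) * kolmogorovOp N A B V x := by
        rw [h1, h2, cutPsi_deriv]
        nlinarith [cutPhi_deriv_nonpos n (V x), hq]
      have h4 : cutPhi n (V x) * kolmogorovOp N A B V x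
          ≤ cutPhi n (V x) * (Q x - Θ x) :=
        mul_le_mul_of_nonneg_left (hLV x) (cutPhi_nonneg n (V x))
      have h5 : cutPhi n (V x) * (Q x - Θ x)
          = cutPhi n (V x) * Q x - cutPhi n (V x) * Θ x := by ring
      linarith
    have hg : Integrable
        (fun x => cutPhi n (V x) * Q x - kolmogorovOp N A B u x) μ :=
      (hφQint n).sub huint
    have hφΘmeas : AEStronglyMeasurable (fun x => cutPhi n (V x) * Θ x) μ :=
      ((hφVcont n).measurable.mul hΘmeas).aestronglyMeasurable
    have hφΘint : Integrable (fun x => cutPhi n (V x) * Θ x) μ := by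
      refine Integrable.mono' hg hφΘmeas (Filter.Eventually.of_forall fun x => ?_)
      rw [Real.norm_eq_abs,
        abs_of_nonneg (mul_nonneg (cutPhi_nonneg _ _) (hΘpos x))]
      exact hptwise x
    refine ⟨hφΘint, ?_⟩
    have heq : ∫ x, (cutPhi n (V x) * Q x - kolmogorovOp N A B u x) ∂μ
        = ∫ x, cutPhi n (V x) * Q x ∂μ := by
      rw [integral_sub (hφQint n) huint, hint0, sub_zero]
    calc ∫ x, cutPhi n (V x) * Θ x ∂μ
        ≤ ∫ x, (cutPhi n (V x) * Q x - kolmogorovOp N A B u x) ∂μ :=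
          integral_mono hφΘint hg hptwise
      _ = _ := heq
  have hφQ_le : ∀ n : ℕ, ∫ x, cutPhi n (V x) * Q x ∂μ ≤ ∫ x, |Q x| ∂μ := by
    intro n
    refine integral_mono (hφQint n) hQ.abs fun x => ?_
    calc cutPhi n (V x) * Q x ≤ cutPhi n (V x) * |Q x| :=
          mul_le_mul_of_nonneg_left (le_abs_self _) (cutPhi_nonneg _ _)
      _ ≤ 1 * |Q x| := mul_le_mul_of_nonneg_right (cutPhi_le_one _ _) (abs_nonneg _)
      _ = |Q x| := one_mul _
  have hΘint : Integrable Θ μ := by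
    have hmeasn : ∀ n : ℕ,
        Measurable fun x => ENNReal.ofReal (cutPhi n (V x) * Θ x) :=
      fun n => ((hφVcont n).measurable.mul hΘmeas).ennreal_ofReal
    have hmono : Monotone
        (fun n : ℕ => fun x => ENNReal.ofReal (cutPhi n (V x) * Θ x)) := by
      intro m n hmn
      intro x
      exact ENNReal.ofReal_le_ofReal
        (mul_le_mul_of_nonneg_right (cutPhi_mono hmn (V x)) (hΘpos x))
    have hsup : ∀ x, (⨆ n : ℕ, ENNReal.ofReal (cutPhi n (V x) * Θ x))
        = ENNReal.ofReal (Θ x) := by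
      intro x
      apply le_antisymm
      · refine iSup_le fun n => ENNReal.ofReal_le_ofReal ?_
        nlinarith [cutPhi_le_one n (V x), cutPhi_nonneg n (V x), hΘpos x]
      · refine le_iSup_of_le ⌈V x⌉₊ ?_
        rw [cutPhi_eq_one _ (Nat.le_ceil (V x)), one_mul]
    have hlim : ∫⁻ x, ENNReal.ofReal (Θ x) ∂μ
        ≤ ENNReal.ofReal (∫ x, |Q x| ∂μ) := by
      have h1 : ∫⁻ x, ENNReal.ofReal (Θ x) ∂μ
          = ⨆ n : ℕ, ∫⁻ x, ENNReal.ofReal (cutPhi n (V x) * Θ x) ∂μ := by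
        calc ∫⁻ x, ENNReal.ofReal (Θ x) ∂μ
            = ∫⁻ x, ⨆ n : ℕ, ENNReal.ofReal (cutPhi n (V x) * Θ x) ∂μ :=
              lintegral_congr fun x => (hsup x).symm
          _ = ⨆ n : ℕ, ∫⁻ x, ENNReal.ofReal (cutPhi n (V x) * Θ x) ∂μ :=
              lintegral_iSup hmeasn hmono
      rw [h1]
      refine iSup_le fun n => ?_
      have h2 : ∫⁻ x, ENNReal.ofReal (cutPhi n (V x) * Θ x) ∂μ
          = ENNReal.ofReal (∫ x, cutPhi n (V x) * Θ x ∂μ) :=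
        (ofReal_integral_eq_lintegral_ofReal (key n).1
          (Filter.Eventually.of_forall fun x =>
            mul_nonneg (cutPhi_nonneg _ _) (hΘpos x))).symm
      rw [h2]
      exact ENNReal.ofReal_le_ofReal ((key n).2.trans (hφQ_le n))
    refine ⟨hΘmeas.aestronglyMeasurable, ?_⟩
    rw [hasFiniteIntegral_iff_ofReal (Filter.Eventually.of_forall hΘpos)]
    exact lt_of_le_of_lt hlim ENNReal.ofReal_lt_top
  refine ⟨hΘint, ?_⟩
  have hptlim : ∀ (f : EuclideanSpace ℝ (Fin N) → ℝ) (x : EuclideanSpace ℝ (Fin N)),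
      Filter.Tendsto (fun n : ℕ => cutPhi n (V x) * f x) Filter.atTop
        (nhds (f x)) := by
    intro f x
    apply tendsto_atTop_of_eventually_const (i₀ := ⌈V x⌉₊)
    intro n hn
    rw [cutPhi_eq_one n ((Nat.le_ceil (V x)).trans (Nat.cast_le.2 hn)), one_mul]
  have t1 : Filter.Tendsto (fun n : ℕ => ∫ x, cutPhi n (V x) * Θ x ∂μ)
      Filter.atTop (nhds (∫ x, Θ x ∂μ)) := by
    refine tendsto_integral_of_dominated_convergence Θ
      (fun n => (key n).1.aestronglyMeasurable) hΘint
      (fun n => Filter.Eventually.of_forall fun x => ?_)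
      (Filter.Eventually.of_forall fun x => hptlim Θ x)
    rw [Real.norm_eq_abs,
      abs_of_nonneg (mul_nonneg (cutPhi_nonneg _ _) (hΘpos x))]
    nlinarith [cutPhi_le_one n (V x), cutPhi_nonneg n (V x), hΘpos x]
  have t2 : Filter.Tendsto (fun n : ℕ => ∫ x, cutPhi n (V x) * Q x ∂μ)
      Filter.atTop (nhds (∫ x, Q x ∂μ)) := by
    refine tendsto_integral_of_dominated_convergence (fun x => |Q x|)
      (fun n => (hφQint n).aestronglyMeasurable) hQ.abs
      (fun n => Filter.Eventually.of_forall fun x => ?_)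
      (Filter.Eventually.of_forall fun x => hptlim Q x)
    rw [Real.norm_eq_abs, abs_mul,
      abs_of_nonneg (cutPhi_nonneg _ _)]
    calc cutPhi n (V x) * |Q x| ≤ 1 * |Q x| :=
          mul_le_mul_of_nonneg_right (cutPhi_le_one _ _) (abs_nonneg _)
      _ = |Q x| := one_mul _
  exact le_of_tendsto_of_tendsto' t1 t2 fun n => (key n).2
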